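/- Let G be a bipartite graph with vertex parts A and B of sizes n and m respectively, and suppose G has at least c·n·m edges for some 0 ≤ c ≤ 1. Then the number of quadruples (u, u', v, v') with u, u' ∈ A and v, v' ∈ B (repetitions allowed) such that all four pairs uv, uv', u'v, u'v' are edges of G is at least c^4 · n² · m²; i.e., G contains at least c^4 n² m² copies of the four-cycle C_4, counting degenerate four-cycles. -/
import Mathlib


open scoped Classical

/-- A bipartite graph with parts `A`, `B` of sizes `n`, `m` and at least `c·n·m` edges
(for some `0 ≤ c ≤ 1`) contains at least `c⁴ n² m²` (possibly degenerate) four-cycles,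
i.e. quadruples `(u, u', v, v')` with all four pairs `uv, uv', u'v, u'v'` edges. -/
theorem bipartite_four_cycles {A B : Type*} [Fintype A] [Fintype B]
    (E : Finset (A × B)) (c : ℝ) (hc0 : 0 ≤ c) (hc1 : c ≤ 1)
    (hE : c * (Fintype.card A : ℝ) * (Fintype.card B : ℝ) ≤ (E.card : ℝ)) :
    c ^ 4 * (Fintype.card A : ℝ) ^ 2 * (Fintype.card B : ℝ) ^ 2 ≤
      ((Finset.univ.filter fun q : (A × A) × (B × B) =>
          (q.1.1, q.2.1) ∈ E ∧ (q.1.1, q.2.2) ∈ E ∧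
          (q.1.2, q.2.1) ∈ E ∧ (q.1.2, q.2.2) ∈ E).card : ℝ) := by
  set g : A → B → ℝ := fun u v => if (u, v) ∈ E then 1 else 0 with hg
  have hgnn : ∀ u v, 0 ≤ g u v := by intro u v; simp [hg]; split <;> norm_num
  -- edge count
  have he : (E.card : ℝ) = ∑ u : A, ∑ v : B, g u v := by
    rw [← Finset.sum_product']
    simp [hg, Finset.sum_ite_mem]
  -- count formula
  have hcount : ((Finset.univ.filter fun q : (A × A) × (B × B) =>
          (q.1.1, q.2.1) ∈ E ∧ (q.1.1, q.2.2) ∈ E ∧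
          (q.1.2, q.2.1) ∈ E ∧ (q.1.2, q.2.2) ∈ E).card : ℝ)
      = ∑ p : A × A, (∑ v : B, g p.1 v * g p.2 v) ^ 2 := by
    rw [Finset.card_filter]
    push_cast
    rw [Fintype.sum_prod_type]
    simp only [Fintype.sum_prod_type, sq, Finset.sum_mul_sum]
    congr 1; ext u1; congr 1; ext u2
    congr 1; ext v1; congr 1; ext v2
    simp [hg, ite_and]
    split_ifs <;> norm_num
  rw [hcount]
  set Q := ∑ p : A × A, (∑ v : B, g p.1 v * g p.2 v) ^ 2 with hQ
  set D : B → ℝ := fun v => ∑ u : A, g u v with hD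
  have hQ0 : 0 ≤ Q := Finset.sum_nonneg fun p _ => sq_nonneg _
  have hT : ∑ p : A × A, (∑ v : B, g p.1 v * g p.2 v) = ∑ v : B, D v ^ 2 := by
    rw [Fintype.sum_prod_type]
    simp only [hD, sq, Finset.sum_mul_sum]
    have step : ∀ u1 : A, ∑ u2 : A, ∑ v : B, g u1 v * g u2 v
        = ∑ v : B, ∑ u2 : A, g u1 v * g u2 v := fun u1 => Finset.sum_comm
    simp only [step]
    rw [Finset.sum_comm]
  have hDsum : ∑ v : B, D v = (E.card : ℝ) := by
    rw [he, Finset.sum_comm]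
  have hT0 : 0 ≤ ∑ v : B, D v ^ 2 := Finset.sum_nonneg fun v _ => sq_nonneg _
  have CS1 : ((E.card : ℝ)) ^ 2 ≤ (Fintype.card B : ℝ) * ∑ v : B, D v ^ 2 := by
    rw [← hDsum]
    have := sq_sum_le_card_mul_sum_sq (s := (Finset.univ : Finset B)) (f := D)
    simpa using this
  have CS2 : (∑ v : B, D v ^ 2) ^ 2 ≤ (Fintype.card A : ℝ) ^ 2 * Q := by
    rw [← hT]
    calc (∑ p : A × A, ∑ v : B, g p.1 v * g p.2 v) ^ 2
        ≤ ((Finset.univ : Finset (A × A)).card : ℝ) *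
            ∑ p : A × A, (∑ v : B, g p.1 v * g p.2 v) ^ 2 := sq_sum_le_card_mul_sum_sq
      _ = (Fintype.card A : ℝ) ^ 2 * Q := by
          rw [hQ]; push_cast [Finset.card_univ, Fintype.card_prod]; ring
  set n := (Fintype.card A : ℝ) with hn
  set m := (Fintype.card B : ℝ) with hm
  have hn0 : 0 ≤ n := by positivity
  have hm0 : 0 ≤ m := by positivity
  rcases eq_or_lt_of_le hn0 with hn' | hn'
  · rw [← hn']; simpa using hQ0
  rcases eq_or_lt_of_le hm0 with hm' | hm'
  · rw [← hm']; simpa using hQ0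
  have h1 : (c * n * m) ^ 2 ≤ m * ∑ v : B, D v ^ 2 := by
    calc (c * n * m) ^ 2 ≤ ((E.card : ℝ)) ^ 2 := by
          apply pow_le_pow_left₀ (by positivity) hE
      _ ≤ m * ∑ v : B, D v ^ 2 := CS1
  have h2 : ((c * n * m) ^ 2) ^ 2 ≤ (m * ∑ v : B, D v ^ 2) ^ 2 :=
    pow_le_pow_left₀ (by positivity) h1 2
  have h3 : (m * ∑ v : B, D v ^ 2) ^ 2 ≤ m ^ 2 * (n ^ 2 * Q) := by
    rw [mul_pow]
    exact mul_le_mul_of_nonneg_left CS2 (by positivity)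
  have h4 : ((c * n * m) ^ 2) ^ 2 ≤ m ^ 2 * (n ^ 2 * Q) := h2.trans h3
  have key : c ^ 4 * n ^ 2 * m ^ 2 * (n ^ 2 * m ^ 2) ≤ Q * (n ^ 2 * m ^ 2) := by
    calc c ^ 4 * n ^ 2 * m ^ 2 * (n ^ 2 * m ^ 2) = ((c * n * m) ^ 2) ^ 2 := by ring
      _ ≤ m ^ 2 * (n ^ 2 * Q) := h4
      _ = Q * (n ^ 2 * m ^ 2) := by ring
  exact le_of_mul_le_mul_right key (by positivity)
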